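/- Let k ≥ 2 and n ≥ 4 be integers and let H_{k,n} be the graph described in the context. Then the set of pairs {(u,v), (z_{1,1}, z_{1,2}),…,(z_{k−1,1}, z_{k−1,2})} is a pairing total dominating set of H_{k,n}; that is, for every choice x_0 ∈ {u,v} and x_i ∈ {z_{i,1}, z_{i,2}} for i = 1,…,k−1, the set {x_0, x_1,…,x_{k−1}} is a total dominating set of H_{k,n}. -/
import Mathlib


/-- Vertices of `H_{k,n}`: the clique vertices `y_j` (`Sum.inl`), the vertices
`z_{i,j}` (`Sum.inr (Sum.inl (i,j))`, 0-indexed), and the two vertices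
`u = Sum.inr (Sum.inr false)` and `v = Sum.inr (Sum.inr true)`. -/
abbrev HknV (k n : ℕ) := Fin n ⊕ ((Fin (k - 1) × Fin n) ⊕ Bool)

/-- Edge relation of `H_{k,n}`: the `y`'s form a `K_n`; for each `i` the
`z_{i,·}`'s form a `K_n` minus the edge `z_{i,1} z_{i,2}` (0-indexed: second
coordinates `0` and `1`); both `u` and `v` are adjacent to every `y_j` and to
`z_{i,1}`, `z_{i,2}` for every `i`; `u` and `v` are nonadjacent. -/
def HknRel (k n : ℕ) : HknV k n → HknV k n → Prop
  | .inl _, .inl _ => True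
  | .inr (.inl p), .inr (.inl q) =>
      p.1 = q.1 ∧ ¬((p.2.val = 0 ∧ q.2.val = 1) ∨ (p.2.val = 1 ∧ q.2.val = 0))
  | .inr (.inr _), .inl _ => True
  | .inr (.inr _), .inr (.inl p) => p.2.val = 0 ∨ p.2.val = 1
  | _, _ => False

/-- The graph `H_{k,n}`. -/
def Hkn (k n : ℕ) : SimpleGraph (HknV k n) := SimpleGraph.fromRel (HknRel k n)

/-- `D` is a total dominating set of `G`. -/
def IsTotalDomSet {V : Type*} (G : SimpleGraph V) (D : Finset V) : Prop :=
  ∀ v : V, ∃ d ∈ D, G.Adj v d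

/-- `{(u,v), (z_{1,1},z_{1,2}), …, (z_{k-1,1},z_{k-1,2})}` is a pairing total
dominating set of `H_{k,n}`: for every choice `x_0 ∈ {u,v}` (given by a
Boolean `b`) and `x_i ∈ {z_{i,1}, z_{i,2}}` for each `i`, the set
`{x_0, x_1, …, x_{k-1}}` is a total dominating set of `H_{k,n}`. -/
theorem stmt5 (k n : ℕ) (hk : 2 ≤ k) (hn : 4 ≤ n)
    (b : Bool) (c : Fin (k - 1) → Fin n) (hc : ∀ i, (c i).val = 0 ∨ (c i).val = 1) :
    IsTotalDomSet (Hkn k n)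
      (insert (Sum.inr (Sum.inr b))
        (Finset.image (fun i => Sum.inr (Sum.inl (i, c i))) Finset.univ)) := by
  intro w
  match w with
  | .inl j =>
      refine ⟨Sum.inr (Sum.inr b), Finset.mem_insert_self _ _, ?_⟩
      exact (SimpleGraph.fromRel_adj _ _ _).mpr ⟨by simp, Or.inr trivial⟩
  | .inr (.inr a) =>
      have hk1 : 0 < k - 1 := by omega
      refine ⟨Sum.inr (Sum.inl (⟨0, hk1⟩, c ⟨0, hk1⟩)),
        Finset.mem_insert_of_mem (Finset.mem_image_of_mem _ (Finset.mem_univ _)), ?_⟩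
      exact (SimpleGraph.fromRel_adj _ _ _).mpr ⟨by simp, Or.inl (hc _)⟩
  | .inr (.inl (i, j)) =>
      by_cases hj : j.val = 0 ∨ j.val = 1
      · refine ⟨Sum.inr (Sum.inr b), Finset.mem_insert_self _ _, ?_⟩
        exact (SimpleGraph.fromRel_adj _ _ _).mpr ⟨by simp, Or.inr hj⟩
      · refine ⟨Sum.inr (Sum.inl (i, c i)), Finset.mem_insert_of_mem
          (Finset.mem_image_of_mem _ (Finset.mem_univ _)), ?_⟩
        refine (SimpleGraph.fromRel_adj _ _ _).mpr ⟨?_, Or.inl ⟨rfl, ?_⟩⟩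
        · simp only [ne_eq, Sum.inr.injEq, Sum.inl.injEq, Prod.mk.injEq, not_and]
          intro _ h
          exact hj (by rw [h]; exact hc i)
        · push_neg at hj
          have := hc i
          dsimp only
          omega
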